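/- Let $q, t$ be complex numbers with $t \ne 1$, let $x_1,\dots,x_n$ and $y_1,\dots,y_m$ be complex numbers such that all $x_i$ are pairwise distinct, all $y_j$ are pairwise distinct, and $x_i \ne y_j$ for all $i, j$. Define $A_i = \prod_{k \ne i} \frac{x_i - t x_k}{x_i - x_k} \prod_{j=1}^m \frac{x_i - q y_j}{x_i - y_j}$ and $B_j = \prod_{i=1}^n \frac{y_j - t x_i}{y_j - x_i} \prod_{l \ne j} \frac{y_j - q y_l}{y_j - y_l}$. Then $\sum_{i=1}^n A_i + \frac{1-q}{1-t} \sum_{j=1}^m B_j = \frac{t^n q^m - 1}{t - 1}$. -/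

import Mathlib

open Finset

open Polynomial

lemma key {F : Type*} [Field F] {ι : Type*} [DecidableEq ι] (s : Finset ι)
    (v w : ι → F) (hv : Set.InjOn v s) (c : F) :
    ∑ i ∈ s, (∏ k ∈ s, (v i - w k)) * ∏ k ∈ s.erase i, ((c - v k) / (v i - v k)) =
    ∏ k ∈ s, (c - w k) - ∏ k ∈ s, (c - v k) := by
  set N : F[X] := ∏ k ∈ s, (X - C (w k)) with hN
  set D : F[X] := ∏ k ∈ s, (X - C (v k)) with hD
  have hNm : N.Monic := monic_prod_of_monic _ _ fun _ _ => monic_X_sub_C _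
  have hDm : D.Monic := monic_prod_of_monic _ _ fun _ _ => monic_X_sub_C _
  have hNd : N.degree = s.card := by
    rw [hN, degree_prod]; simp [degree_X_sub_C]
  have hDd : D.degree = s.card := by
    rw [hD, degree_prod]; simp [degree_X_sub_C]
  have hdeg : (N - D).degree < (s.card : WithBot ℕ) := by
    rcases eq_or_ne N D with h | h
    · rw [h, sub_self, degree_zero]; exact WithBot.bot_lt_coe _
    · exact hNd ▸ degree_sub_lt (hNd.trans hDd.symm) hNm.ne_zero
        (by rw [hNm.leadingCoeff, hDm.leadingCoeff])
  have hf := Lagrange.eq_interpolate hv hdeg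
  have h2 := congrArg (Polynomial.eval c) hf
  rw [Lagrange.interpolate_apply, eval_finset_sum] at h2
  have hbasis : ∀ i ∈ s, eval c (C (eval (v i) (N - D)) * Lagrange.basis s v i)
      = (∏ k ∈ s, (v i - w k)) * ∏ k ∈ s.erase i, ((c - v k) / (v i - v k)) := by
    intro i hi
    have hNi : eval (v i) N = ∏ k ∈ s, (v i - w k) := by rw [hN, eval_prod]; simp
    have hDi : eval (v i) D = 0 := by
      rw [hD, eval_prod]
      exact Finset.prod_eq_zero hi (by simp)
    rw [eval_mul, eval_C, eval_sub, hNi, hDi, sub_zero, Lagrange.basis, eval_prod]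
    congr 1
    refine Finset.prod_congr rfl fun j hj => ?_
    rw [Lagrange.basisDivisor, eval_mul, eval_C, eval_sub, eval_X, eval_C,
      div_eq_inv_mul]
  rw [Finset.sum_congr rfl hbasis] at h2
  rw [← h2, eval_sub]
  congr 1 <;> [rw [hN, eval_prod]; rw [hD, eval_prod]] <;> simp

lemma erase_inl {α β : Type*} [Fintype α] [Fintype β] [DecidableEq α] [DecidableEq β]
    (i : α) (g : α ⊕ β → ℂ) :
    ∏ k ∈ (Finset.univ : Finset (α ⊕ β)).erase (Sum.inl i), g k =
    (∏ k ∈ Finset.univ.erase i, g (Sum.inl k)) * ∏ j, g (Sum.inr j) := by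
  rw [show (Finset.univ : Finset (α ⊕ β)).erase (Sum.inl i)
      = (Finset.univ.erase i).disjSum Finset.univ by ext k; cases k <;> simp,
    Finset.prod_disjSum]

lemma erase_inr {α β : Type*} [Fintype α] [Fintype β] [DecidableEq α] [DecidableEq β]
    (j : β) (g : α ⊕ β → ℂ) :
    ∏ k ∈ (Finset.univ : Finset (α ⊕ β)).erase (Sum.inr j), g k =
    (∏ k, g (Sum.inl k)) * ∏ l ∈ Finset.univ.erase j, g (Sum.inr l) := by
  rw [show (Finset.univ : Finset (α ⊕ β)).erase (Sum.inr j)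
      = Finset.univ.disjSum (Finset.univ.erase j) by ext k; cases k <;> simp,
    Finset.prod_disjSum]

lemma generic (q t : ℂ) (ht : t ≠ 1) (n m : ℕ)
    (x : Fin n → ℂ) (y : Fin m → ℂ)
    (hx : Function.Injective x) (hy : Function.Injective y)
    (hxy : ∀ i j, x i ≠ y j)
    (hx0 : ∀ i, x i ≠ 0) (hy0 : ∀ j, y j ≠ 0) :
    ∑ i, ((∏ k ∈ Finset.univ.erase i, (x i - t * x k) / (x i - x k)) *
        ∏ j, (x i - q * y j) / (x i - y j)) +
      (1 - q) / (1 - t) *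
      ∑ j, ((∏ i, (y j - t * x i) / (y j - x i)) *
        ∏ l ∈ Finset.univ.erase j, (y j - q * y l) / (y j - y l)) =
    (t ^ n * q ^ m - 1) / (t - 1) := by
  classical
  let z : Fin n ⊕ Fin m → ℂ := Sum.elim x y
  let w : Fin n ⊕ Fin m → ℂ := Sum.elim (fun i => t * x i) (fun j => q * y j)
  have hz : Function.Injective z := by
    intro a b hab
    cases a <;> cases b <;> simp only [z, Sum.elim_inl, Sum.elim_inr] at hab
    · exact congrArg _ (hx hab)
    · exact absurd hab (hxy _ _)
    · exact absurd hab.symm (hxy _ _)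
    · exact congrArg _ (hy hab)
  have hz0 : ∀ k, z k ≠ 0 := by rintro (i | j) <;> [exact hx0 i; exact hy0 j]
  have hzne : ∀ a k : Fin n ⊕ Fin m, k ≠ a → z a - z k ≠ 0 := by
    intro a k hk
    exact sub_ne_zero.mpr fun h => hk (hz h.symm)
  set P : ℂ := ∏ k, ((0 : ℂ) - z k) with hPdef
  have hP : P ≠ 0 := Finset.prod_ne_zero_iff.mpr fun k _ =>
    sub_ne_zero.mpr fun h => hz0 k h.symm
  have hkey := key Finset.univ z w hz.injOn 0
  -- termwise computation
  have hterm : ∀ a : Fin n ⊕ Fin m,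
      (∏ k, (z a - w k)) * ∏ k ∈ Finset.univ.erase a, ((0 - z k) / (z a - z k)) =
      Sum.elim
        (fun i => (t - 1) * P * ((∏ k ∈ Finset.univ.erase i, (x i - t * x k) / (x i - x k)) *
          ∏ j, (x i - q * y j) / (x i - y j)))
        (fun j => (q - 1) * P * ((∏ i, (y j - t * x i) / (y j - x i)) *
          ∏ l ∈ Finset.univ.erase j, (y j - q * y l) / (y j - y l))) a := by
    rintro (i | j)
    · have hA : (∏ k ∈ Finset.univ.erase i, (x i - t * x k) / (x i - x k)) *
          ∏ j, (x i - q * y j) / (x i - y j) =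
          ∏ k ∈ (Finset.univ : Finset (Fin n ⊕ Fin m)).erase (Sum.inl i),
            ((z (Sum.inl i) - w k) / (z (Sum.inl i) - z k)) :=
        (erase_inl i fun k => (z (Sum.inl i) - w k) / (z (Sum.inl i) - z k)).symm
      simp only [Sum.elim_inl]
      rw [hA,
        ← Finset.mul_prod_erase Finset.univ (fun k => z (Sum.inl i) - w k)
          (Finset.mem_univ (Sum.inl i)),
        show P = (0 - z (Sum.inl i)) * ∏ k ∈ Finset.univ.erase (Sum.inl i), ((0:ℂ) - z k) from
          (Finset.mul_prod_erase Finset.univ _ (Finset.mem_univ _)).symm,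
        Finset.prod_div_distrib, Finset.prod_div_distrib]
      simp only [z, w, Sum.elim_inl]
      ring
    · have hB : (∏ i, (y j - t * x i) / (y j - x i)) *
          ∏ l ∈ Finset.univ.erase j, (y j - q * y l) / (y j - y l) =
          ∏ k ∈ (Finset.univ : Finset (Fin n ⊕ Fin m)).erase (Sum.inr j),
            ((z (Sum.inr j) - w k) / (z (Sum.inr j) - z k)) :=
        (erase_inr j fun k => (z (Sum.inr j) - w k) / (z (Sum.inr j) - z k)).symm
      simp only [Sum.elim_inr]
      rw [hB,
        ← Finset.mul_prod_erase Finset.univ (fun k => z (Sum.inr j) - w k)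
          (Finset.mem_univ (Sum.inr j)),
        show P = (0 - z (Sum.inr j)) * ∏ k ∈ Finset.univ.erase (Sum.inr j), ((0:ℂ) - z k) from
          (Finset.mul_prod_erase Finset.univ _ (Finset.mem_univ _)).symm,
        Finset.prod_div_distrib, Finset.prod_div_distrib]
      simp only [z, w, Sum.elim_inr]
      ring
  rw [Finset.sum_congr rfl fun a _ => hterm a] at hkey
  rw [Fintype.sum_sum_type] at hkey
  simp only [Sum.elim_inl, Sum.elim_inr] at hkey
  have hw : (∏ k, ((0:ℂ) - w k)) = t ^ n * q ^ m * P := by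
    rw [hPdef, Fintype.prod_sum_type, Fintype.prod_sum_type]
    simp only [z, w, Sum.elim_inl, Sum.elim_inr]
    rw [show (∏ i, ((0:ℂ) - t * x i)) = ∏ i, (t * (0 - x i)) from
        Finset.prod_congr rfl fun _ _ => by ring,
      show (∏ j, ((0:ℂ) - q * y j)) = ∏ j, (q * (0 - y j)) from
        Finset.prod_congr rfl fun _ _ => by ring,
      Finset.prod_mul_distrib, Finset.prod_mul_distrib, Finset.prod_const,
      Finset.prod_const, Finset.card_univ, Finset.card_univ, Fintype.card_fin,
      Fintype.card_fin]
    ring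
  rw [hw] at hkey
  rw [← Finset.mul_sum, ← Finset.mul_sum] at hkey
  set SA := ∑ i, ((∏ k ∈ Finset.univ.erase i, (x i - t * x k) / (x i - x k)) *
      ∏ j, (x i - q * y j) / (x i - y j)) with hSA
  set SB := ∑ j, ((∏ i, (y j - t * x i) / (y j - x i)) *
      ∏ l ∈ Finset.univ.erase j, (y j - q * y l) / (y j - y l)) with hSB
  have heq' : (t - 1) * SA + (q - 1) * SB = t ^ n * q ^ m - 1 := by
    apply mul_right_cancel₀ hP
    linear_combination hkey
  have ht1 : t - 1 ≠ 0 := sub_ne_zero.mpr ht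
  have h1t : (1 : ℂ) - t ≠ 0 := sub_ne_zero.mpr (Ne.symm ht)
  field_simp
  linear_combination (1 - t) * heq'

theorem stmt5 (q t : ℂ) (ht : t ≠ 1) (n m : ℕ) (hn : 0 < n) (hm : 0 < m)
    (x : Fin n → ℂ) (y : Fin m → ℂ)
    (hx : Function.Injective x) (hy : Function.Injective y)
    (hxy : ∀ i j, x i ≠ y j) :
    ∑ i, ((∏ k ∈ Finset.univ.erase i, (x i - t * x k) / (x i - x k)) *
        ∏ j, (x i - q * y j) / (x i - y j)) +
      (1 - q) / (1 - t) *
      ∑ j, ((∏ i, (y j - t * x i) / (y j - x i)) *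
        ∏ l ∈ Finset.univ.erase j, (y j - q * y l) / (y j - y l)) =
    (t ^ n * q ^ m - 1) / (t - 1) := by
  classical
  set G : ℂ → ℂ := fun ε =>
    ∑ i, ((∏ k ∈ Finset.univ.erase i, ((x i + ε) - t * (x k + ε)) / (x i - x k)) *
        ∏ j, ((x i + ε) - q * (y j + ε)) / (x i - y j)) +
      (1 - q) / (1 - t) *
      ∑ j, ((∏ i, ((y j + ε) - t * (x i + ε)) / (y j - x i)) *
        ∏ l ∈ Finset.univ.erase j, ((y j + ε) - q * (y l + ε)) / (y j - y l)) with hG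
  have hGcont : Continuous G := by
    apply Continuous.add
    · apply continuous_finset_sum
      intro i _
      exact (continuous_finset_prod _ fun k _ =>
          ((by fun_prop : Continuous fun ε => (x i + ε) - t * (x k + ε)).div_const _)).mul
        (continuous_finset_prod _ fun j _ =>
          ((by fun_prop : Continuous fun ε => (x i + ε) - q * (y j + ε)).div_const _))
    · exact continuous_const.mul (continuous_finset_sum _ fun j _ =>
        (continuous_finset_prod _ fun i _ =>
          ((by fun_prop : Continuous fun ε => (y j + ε) - t * (x i + ε)).div_const _)).mul
        (continuous_finset_prod _ fun l _ =>
          ((by fun_prop : Continuous fun ε => (y j + ε) - q * (y l + ε)).div_const _)))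
  set B : Set ℂ := (Set.range fun i => -x i) ∪ (Set.range fun j => -y j) with hB
  have hBfin : B.Finite := (Set.finite_range _).union (Set.finite_range _)
  have hdense : Dense Bᶜ := Set.Countable.dense_compl ℂ hBfin.countable
  have hEq : Set.EqOn G (fun _ => (t ^ n * q ^ m - 1) / (t - 1)) Bᶜ := by
    intro ε hε
    have hx0 : ∀ i, x i + ε ≠ 0 := fun i h => hε (Or.inl ⟨i, by linear_combination -h⟩)
    have hy0 : ∀ j, y j + ε ≠ 0 := fun j h => hε (Or.inr ⟨j, by linear_combination -h⟩)
    have hx' : Function.Injective fun i => x i + ε := fun a b h =>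
      hx (by simpa using h)
    have hy' : Function.Injective fun j => y j + ε := fun a b h =>
      hy (by simpa using h)
    have hxy' : ∀ i j, x i + ε ≠ y j + ε := fun i j h => hxy i j (by simpa using h)
    have h := generic q t ht n m (fun i => x i + ε) (fun j => y j + ε) hx' hy' hxy' hx0 hy0
    simp only [add_sub_add_right_eq_sub] at h
    exact h
  have hGeq := hGcont.ext_on hdense continuous_const hEq
  have h0 := congrFun hGeq 0
  simp only [hG, add_zero] at h0
  exact h0
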